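/- arXiv:1601.06231 — 3 statements merged into one kernel-verified Lean document; each statement's English description precedes it below -/
import Mathlib

section
/- Let A and B be positive semidefinite operators on a finite-dimensional complex Hilbert space and let Y° = B + (A − B)_+. Then every operator Φ with 0 ≤ Φ ≤ 1 satisfies Tr Y° ≥ Tr(AΦ) + Tr(B(1 − Φ)), and equality holds if and only if P_≥(A − B) ≥ Φ ≥ P_>(A − B). -/
open Matrix
open scoped ComplexOrder

/-- Positive part `A₊` of a Hermitian matrix (junk value `0` on non-Hermitian input). -/
noncomputable def matPosPart {n : ℕ} (A : Matrix (Fin n) (Fin n) ℂ) : Matrix (Fin n) (Fin n) ℂ :=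
  if hA : A.IsHermitian then
    (hA.eigenvectorUnitary : Matrix (Fin n) (Fin n) ℂ) *
      Matrix.diagonal (fun i => if 0 < hA.eigenvalues i then (hA.eigenvalues i : ℂ) else 0) *
      star (hA.eigenvectorUnitary : Matrix (Fin n) (Fin n) ℂ)
  else 0

/-- Projection `P₍>₎(A)` onto the span of eigenvectors of positive eigenvalues. -/
noncomputable def matProjPos {n : ℕ} (A : Matrix (Fin n) (Fin n) ℂ) : Matrix (Fin n) (Fin n) ℂ :=
  if hA : A.IsHermitian then
    (hA.eigenvectorUnitary : Matrix (Fin n) (Fin n) ℂ) *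
      Matrix.diagonal (fun i => if 0 < hA.eigenvalues i then (1 : ℂ) else 0) *
      star (hA.eigenvectorUnitary : Matrix (Fin n) (Fin n) ℂ)
  else 0

/-- Projection `P₍≥₎(A)` onto the span of eigenvectors of nonnegative eigenvalues. -/
noncomputable def matProjNonneg {n : ℕ} (A : Matrix (Fin n) (Fin n) ℂ) : Matrix (Fin n) (Fin n) ℂ :=
  if hA : A.IsHermitian then
    (hA.eigenvectorUnitary : Matrix (Fin n) (Fin n) ℂ) *
      Matrix.diagonal (fun i => if 0 ≤ hA.eigenvalues i then (1 : ℂ) else 0) *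
      star (hA.eigenvectorUnitary : Matrix (Fin n) (Fin n) ℂ)
  else 0

lemma psd_diag_nonneg' {n : ℕ} {M : Matrix (Fin n) (Fin n) ℂ} (hM : M.PosSemidef)
    (i : Fin n) : 0 ≤ M i i := by
  exact hM.diag_nonneg

lemma psd_row_zero' {n : ℕ} {M : Matrix (Fin n) (Fin n) ℂ} (hM : M.PosSemidef)
    {i : Fin n} (h : M i i = 0) (j : Fin n) : M i j = 0 := by
  obtain ⟨Bm, rfl⟩ : ∃ Bm : Matrix (Fin n) (Fin n) ℂ, M = Bmᴴ * Bm := by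
    open MatrixOrder in exact CStarAlgebra.nonneg_iff_eq_star_mul_self.mp hM.nonneg
  have hcol : ∀ k, Bm k i = 0 := by
    have h' : ∑ k, Complex.normSq (Bm k i) = 0 := by
      have h2 : (∑ k, (Complex.normSq (Bm k i) : ℂ)) = 0 := by
        rw [← h, Matrix.mul_apply]
        exact Finset.sum_congr rfl fun k _ => by
          rw [Matrix.conjTranspose_apply, Complex.normSq_eq_conj_mul_self]; rfl
      exact_mod_cast h2
    intro k
    have := (Finset.sum_eq_zero_iff_of_nonneg (fun k _ => Complex.normSq_nonneg _)).mp h' k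
      (Finset.mem_univ k)
    exact Complex.normSq_eq_zero.mp this
  rw [Matrix.mul_apply]
  exact Finset.sum_eq_zero fun k _ => by
    rw [Matrix.conjTranspose_apply, hcol k, star_zero, zero_mul]

lemma eqNonneg' {n : ℕ} (lam : Fin n → ℝ) (Ψ : Matrix (Fin n) (Fin n) ℂ)
    (hsymm : ∀ i j, Ψ i j = star (Ψ j i))
    (hP : ∀ i, 0 < lam i → ∀ j, Ψ i j = if i = j then 1 else 0)
    (hN : ∀ i, lam i < 0 → ∀ j, Ψ i j = 0) :
    Matrix.diagonal (fun i => if 0 ≤ lam i then (1:ℂ) else 0) - Ψ =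
      Matrix.diagonal (fun i => if lam i = 0 then (1:ℂ) else 0) * (1 - Ψ) *
      Matrix.diagonal (fun i => if lam i = 0 then (1:ℂ) else 0) := by
  ext i j
  rw [Matrix.mul_diagonal, Matrix.diagonal_mul, Matrix.sub_apply, Matrix.diagonal_apply,
    Matrix.sub_apply, Matrix.one_apply]
  rcases lt_trichotomy (lam i) 0 with hi | hi | hi
  · simp [hN i hi j, hi.ne, not_le.mpr hi]
  · rcases lt_trichotomy (lam j) 0 with hj | hj | hj
    · have hij : i ≠ j := fun h => absurd hi (by rw [h]; exact hj.ne)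
      simp [hsymm i j, hN j hj i, hij, hi, hj.ne]
    · simp [hi, hj.symm]
    · have hij : i ≠ j := fun h => absurd hi (by rw [h]; exact hj.ne')
      simp [hsymm i j, hP j hj i, hij, Ne.symm hij, hi, hj.ne']
  · simp [hP i hi j, hi.ne', le_of_lt hi]

lemma eqPos' {n : ℕ} (lam : Fin n → ℝ) (Ψ : Matrix (Fin n) (Fin n) ℂ)
    (hsymm : ∀ i j, Ψ i j = star (Ψ j i))
    (hP : ∀ i, 0 < lam i → ∀ j, Ψ i j = if i = j then 1 else 0) :
    Ψ - Matrix.diagonal (fun i => if 0 < lam i then (1:ℂ) else 0) =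
      Matrix.diagonal (fun i => if 0 < lam i then (0:ℂ) else 1) * Ψ *
      Matrix.diagonal (fun i => if 0 < lam i then (0:ℂ) else 1) := by
  ext i j
  rw [Matrix.mul_diagonal, Matrix.diagonal_mul, Matrix.sub_apply, Matrix.diagonal_apply]
  by_cases hi : 0 < lam i
  · simp [hP i hi j, hi]
  · by_cases hj : 0 < lam j
    · have hij : i ≠ j := fun h => hi (h ▸ hj)
      simp [hsymm i j, hP j hj i, hij, Ne.symm hij, hi, hj]
    · simp [hi, hj]

/-- For PSD `A`, `B` and `Y° = B + (A − B)₊`, every `Φ` with `0 ≤ Φ ≤ 1`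
satisfies `Tr Y° ≥ Tr(AΦ) + Tr(B(1 − Φ))`, with equality iff
`P₍≥₎(A − B) ≥ Φ ≥ P₍>₎(A − B)`. -/
theorem stmt_1 {n : ℕ} (A B Φ : Matrix (Fin n) (Fin n) ℂ)
    (hA : A.PosSemidef) (hB : B.PosSemidef)
    (hΦ : Φ.PosSemidef) (hΦ1 : ((1 : Matrix (Fin n) (Fin n) ℂ) - Φ).PosSemidef) :
    (A * Φ).trace.re + (B * (1 - Φ)).trace.re ≤ (B + matPosPart (A - B)).trace.re ∧
    ((A * Φ).trace.re + (B * (1 - Φ)).trace.re = (B + matPosPart (A - B)).trace.re ↔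
      (matProjNonneg (A - B) - Φ).PosSemidef ∧ (Φ - matProjPos (A - B)).PosSemidef) := by
  classical
  have hC : (A - B).IsHermitian := hA.1.sub hB.1
  set U : Matrix (Fin n) (Fin n) ℂ := (hC.eigenvectorUnitary : Matrix (Fin n) (Fin n) ℂ) with hU
  have hUs : star U * U = 1 := Unitary.coe_star_mul_self _
  have hsU : U * star U = 1 := Unitary.coe_mul_star_self _
  set lam := hC.eigenvalues with hlam
  set Ψ : Matrix (Fin n) (Fin n) ℂ := star U * Φ * U with hΨdef
  set D : Matrix (Fin n) (Fin n) ℂ := Matrix.diagonal (fun i => (lam i : ℂ)) with hD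
  set Dge : Matrix (Fin n) (Fin n) ℂ :=
    Matrix.diagonal (fun i => if 0 ≤ lam i then (1:ℂ) else 0) with hDge
  set Dgt : Matrix (Fin n) (Fin n) ℂ :=
    Matrix.diagonal (fun i => if 0 < lam i then (1:ℂ) else 0) with hDgt
  have hΦeq : U * Ψ * star U = Φ := by
    simp only [hΨdef, ← Matrix.mul_assoc]
    rw [hsU, Matrix.one_mul, Matrix.mul_assoc, hsU, Matrix.mul_one]
  have hΨ : Ψ.PosSemidef := hΦ.conjTranspose_mul_mul_same U
  have hkey : star U * (1 - Φ) * U = 1 - Ψ := by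
    rw [Matrix.mul_sub, Matrix.mul_one, Matrix.sub_mul, hUs, hΨdef]
  have hΨ1 : ((1 : Matrix (Fin n) (Fin n) ℂ) - Ψ).PosSemidef := by
    rw [← hkey]; exact hΦ1.conjTranspose_mul_mul_same U
  have hsymm : ∀ i j, Ψ i j = star (Ψ j i) := fun i j => (hΨ.1.apply i j).symm
  have hspec : A - B = U * D * star U := by
    have := hC.spectral_theorem
    rw [Unitary.conjStarAlgAut_apply] at this
    rw [this]; rfl
  -- diagonal bounds
  have hdiag : ∀ i, 0 ≤ (Ψ i i).re ∧ (Ψ i i).im = 0 ∧ (Ψ i i).re ≤ 1 := by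
    intro i
    have h1 := psd_diag_nonneg' hΨ i
    have h2 := psd_diag_nonneg' hΨ1 i
    rw [Complex.le_def] at h1 h2
    simp only [Matrix.sub_apply, Matrix.one_apply_eq, Complex.zero_re, Complex.zero_im,
      Complex.sub_re, Complex.sub_im, Complex.one_re, Complex.one_im] at h1 h2
    exact ⟨h1.1, h1.2.symm, by linarith [h2.1]⟩
  -- trace identities
  have htr : (A * Φ).trace + (B * (1 - Φ)).trace = B.trace + ((A - B) * Φ).trace := by
    rw [← Matrix.trace_add, ← Matrix.trace_add]; congr 1; noncomm_ring
  have hDtr : ((A - B) * Φ).trace = ∑ i, (lam i : ℂ) * Ψ i i := by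
    rw [hspec]
    calc (U * D * star U * Φ).trace
        = (U * (D * (star U * Φ))).trace := by rw [Matrix.mul_assoc, Matrix.mul_assoc]
      _ = ((D * (star U * Φ)) * U).trace := Matrix.trace_mul_comm _ _
      _ = (D * Ψ).trace := by rw [hΨdef, Matrix.mul_assoc]
      _ = ∑ i, (lam i : ℂ) * Ψ i i := by
          simp [hD, Matrix.trace, Matrix.diag, Matrix.diagonal_mul]
  have hPP : (matPosPart (A - B)).trace = ∑ i, (if 0 < lam i then (lam i : ℂ) else 0) := by
    rw [matPosPart, dif_pos hC, Matrix.trace_mul_cycle, hUs, Matrix.one_mul,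
      Matrix.trace_diagonal]
  have hL : (A * Φ).trace.re + (B * (1 - Φ)).trace.re
      = B.trace.re + ∑ i, lam i * (Ψ i i).re := by
    rw [← Complex.add_re, htr, hDtr, Complex.add_re, Complex.re_sum]
    congr 1
    exact Finset.sum_congr rfl fun i _ => Complex.re_ofReal_mul _ _
  have hR : (B + matPosPart (A - B)).trace.re
      = B.trace.re + ∑ i, (if 0 < lam i then lam i else 0) := by
    rw [Matrix.trace_add, Complex.add_re, hPP, Complex.re_sum]
    congr 1
    refine Finset.sum_congr rfl fun i _ => ?_
    split_ifs <;> simp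
  have hub : ∀ i ∈ Finset.univ, lam i * (Ψ i i).re ≤ (if 0 < lam i then lam i else 0) := by
    intro i _
    obtain ⟨h0, _, h1⟩ := hdiag i
    split_ifs with h
    · nlinarith
    · push_neg at h; nlinarith
  constructor
  · rw [hL, hR]
    exact add_le_add_right (Finset.sum_le_sum hub) _
  rw [hL, hR]
  constructor
  · -- equality implies operator sandwich
    intro heq
    have hsum : ∑ i, lam i * (Ψ i i).re = ∑ i, (if 0 < lam i then lam i else 0) :=
      add_left_cancel heq
    have hterm := (Finset.sum_eq_sum_iff_of_le hub).mp hsum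
    have hPdiag : ∀ i, 0 < lam i → Ψ i i = 1 := by
      intro i hi
      have h := hterm i (Finset.mem_univ i)
      rw [if_pos hi] at h
      have hre : (Ψ i i).re = 1 := by
        have := mul_left_cancel₀ hi.ne' (h.trans (mul_one (lam i)).symm)
        exact this
      exact Complex.ext (by simpa using hre) (by simpa using (hdiag i).2.1)
    have hNdiag : ∀ i, lam i < 0 → Ψ i i = 0 := by
      intro i hi
      have h := hterm i (Finset.mem_univ i)
      rw [if_neg (not_lt.mpr hi.le)] at h
      have hre : (Ψ i i).re = 0 := by
        rcases mul_eq_zero.mp h with h' | h'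
        · exact absurd h' hi.ne
        · exact h'
      exact Complex.ext (by simpa using hre) (by simpa using (hdiag i).2.1)
    have hPent : ∀ i, 0 < lam i → ∀ j, Ψ i j = if i = j then 1 else 0 := by
      intro i hi j
      have hz : ((1 : Matrix (Fin n) (Fin n) ℂ) - Ψ) i i = 0 := by
        simp [Matrix.sub_apply, Matrix.one_apply_eq, hPdiag i hi]
      have h := psd_row_zero' hΨ1 hz j
      rw [Matrix.sub_apply, sub_eq_zero] at h
      rw [← h, Matrix.one_apply]
    have hNent : ∀ i, lam i < 0 → ∀ j, Ψ i j = 0 := fun i hi j =>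
      psd_row_zero' hΨ (hNdiag i hi) j
    have e1 := eqNonneg' lam Ψ hsymm hPent hNent
    have e2 := eqPos' lam Ψ hsymm hPent
    have hstarE : (star fun i => if lam i = 0 then (1:ℂ) else 0)
        = fun i => if lam i = 0 then (1:ℂ) else 0 := by
      funext i
      rw [Pi.star_apply]
      split_ifs <;> simp
    have hE : (Matrix.diagonal (fun i => if lam i = 0 then (1:ℂ) else 0))ᴴ =
        Matrix.diagonal (fun i => if lam i = 0 then (1:ℂ) else 0) := by
      rw [Matrix.diagonal_conjTranspose, hstarE]
    have hstarF : (star fun i => if 0 < lam i then (0:ℂ) else 1)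
        = fun i => if 0 < lam i then (0:ℂ) else 1 := by
      funext i
      rw [Pi.star_apply]
      split_ifs <;> simp
    have hF : (Matrix.diagonal (fun i => if 0 < lam i then (0:ℂ) else 1))ᴴ =
        Matrix.diagonal (fun i => if 0 < lam i then (0:ℂ) else 1) := by
      rw [Matrix.diagonal_conjTranspose, hstarF]
    have hps1 : (Dge - Ψ).PosSemidef := by
      have := hΨ1.conjTranspose_mul_mul_same
        (Matrix.diagonal (fun i => if lam i = 0 then (1:ℂ) else 0))
      rw [hE] at this
      rw [hDge, e1]
      exact this
    have hps2 : (Ψ - Dgt).PosSemidef := by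
      have := hΨ.conjTranspose_mul_mul_same
        (Matrix.diagonal (fun i => if 0 < lam i then (0:ℂ) else 1))
      rw [hF] at this
      rw [hDgt, e2]
      exact this
    have hproj1 : matProjNonneg (A - B) - Φ = U * (Dge - Ψ) * star U := by
      rw [matProjNonneg, dif_pos hC, ← hΦeq, Matrix.mul_sub, Matrix.sub_mul]
    have hproj2 : Φ - matProjPos (A - B) = U * (Ψ - Dgt) * star U := by
      rw [matProjPos, dif_pos hC, ← hΦeq, Matrix.mul_sub, Matrix.sub_mul]
    constructor
    · rw [hproj1]; exact hps1.mul_mul_conjTranspose_same U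
    · rw [hproj2]; exact hps2.mul_mul_conjTranspose_same U
  · -- sandwich implies equality
    rintro ⟨hge, hle⟩
    have hconj : ∀ X : Matrix (Fin n) (Fin n) ℂ, star U * (U * X * star U) * U = X := by
      intro X
      simp only [← Matrix.mul_assoc]
      rw [hUs, Matrix.one_mul, Matrix.mul_assoc, hUs, Matrix.mul_one]
    have c1 : star U * (matProjNonneg (A - B) - Φ) * U = Dge - Ψ := by
      rw [matProjNonneg, dif_pos hC, ← hU, ← hlam, Matrix.mul_sub, Matrix.sub_mul,
        hconj, ← hΨdef, ← hDge]
    have c2 : star U * (Φ - matProjPos (A - B)) * U = Ψ - Dgt := by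
      rw [matProjPos, dif_pos hC, ← hU, ← hlam, Matrix.mul_sub, Matrix.sub_mul,
        hconj, ← hΨdef, ← hDgt]
    have hps1 : (Dge - Ψ).PosSemidef := by
      rw [← c1]
      exact hge.conjTranspose_mul_mul_same U
    have hps2 : (Ψ - Dgt).PosSemidef := by
      rw [← c2]
      exact hle.conjTranspose_mul_mul_same U
    have hPdiag : ∀ i, 0 < lam i → (Ψ i i).re = 1 := by
      intro i hi
      have h := psd_diag_nonneg' hps2 i
      rw [hDgt, Complex.le_def] at h
      simp only [Matrix.sub_apply, Matrix.diagonal_apply_eq, if_pos hi, Complex.zero_re,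
        Complex.sub_re, Complex.one_re] at h
      linarith [h.1, (hdiag i).2.2]
    have hNdiag : ∀ i, lam i < 0 → (Ψ i i).re = 0 := by
      intro i hi
      have h := psd_diag_nonneg' hps1 i
      rw [hDge, Complex.le_def] at h
      simp only [Matrix.sub_apply, Matrix.diagonal_apply_eq, if_neg (not_le.mpr hi),
        Complex.zero_re, Complex.sub_re] at h
      linarith [h.1, (hdiag i).1]
    congr 1
    refine Finset.sum_congr rfl fun i _ => ?_
    rcases lt_trichotomy (lam i) 0 with hi | hi | hi
    · rw [hNdiag i hi, if_neg (not_lt.mpr hi.le), mul_zero]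
    · rw [hi, if_neg (lt_irrefl 0), zero_mul]
    · rw [hPdiag i hi, if_pos hi, mul_one]
end

section
/- Let ρ_0,…,ρ_{M-1} be a quantum state set with Gram operator G = Σ_m ρ_m, let 0 ≤ p ≤ 1, and let Π_0,…,Π_M be an (M+1)-outcome POVM whose inconclusive probability is Tr(G Π_M) = p. Then for every a ≥ 0 and every positive semidefinite operator Z satisfying Z ≥ ρ_m for all m ∈ {0,…,M−1} and Z ≥ aG, the success probability satisfies Σ_{m=0}^{M-1} Tr(ρ_m Π_m) ≤ Tr Z − a·p. -/
open Matrix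
open scoped ComplexOrder

lemma trace_re_nonneg_of_psd {n : ℕ} {A : Matrix (Fin n) (Fin n) ℂ} (hA : A.PosSemidef) :
    0 ≤ A.trace.re := by
  rw [Matrix.trace, Complex.re_sum]
  apply Finset.sum_nonneg
  intro i _
  have := hA.re_dotProduct_nonneg (Pi.single i 1)
  simpa [dotProduct, Matrix.mulVec, Pi.single_apply, Finset.sum_ite_eq] using this

lemma trace_mul_re_nonneg {n : ℕ} {A B : Matrix (Fin n) (Fin n) ℂ}
    (hA : A.PosSemidef) (hB : B.PosSemidef) : 0 ≤ (A * B).trace.re := by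
  obtain ⟨C, rfl⟩ : ∃ C : Matrix (Fin n) (Fin n) ℂ, B = Cᴴ * C := by
    open scoped MatrixOrder in
    obtain ⟨C, hC⟩ := CStarAlgebra.nonneg_iff_eq_star_mul_self.mp hB.nonneg
    exact ⟨C, hC⟩
  have h1 : (A * (Cᴴ * C)).trace = (C * A * Cᴴ).trace := by
    rw [← Matrix.mul_assoc, Matrix.trace_mul_cycle]
  rw [h1]
  exact trace_re_nonneg_of_psd (hA.mul_mul_conjTranspose_same C)

/-- For a quantum state set with Gram operator `G`, an `(M+1)`-outcome POVM
with inconclusive probability `Tr(G Π_M) = p`, every `a ≥ 0` and every PSD `Z` with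
`Z ≥ ρ_m` for all `m` and `Z ≥ aG`, one has `Σ_m Tr(ρ_m Π_m) ≤ Tr Z − a·p`. -/
theorem stmt_8 {n M : ℕ} (hM : 0 < M) (ρ : ℕ → Matrix (Fin n) (Fin n) ℂ)
    (hρ : ∀ m < M, (ρ m).PosSemidef)
    (hρpos : ∀ m < M, 0 < (ρ m).trace.re)
    (hρsum : ∑ m ∈ Finset.range M, (ρ m).trace.re = 1)
    (G : Matrix (Fin n) (Fin n) ℂ) (hG : G = ∑ m ∈ Finset.range M, ρ m)
    (p : ℝ) (hp0 : 0 ≤ p) (hp1 : p ≤ 1)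
    (Pm : ℕ → Matrix (Fin n) (Fin n) ℂ)
    (hPm : ∀ m < M + 1, (Pm m).PosSemidef)
    (hPsum : ∑ m ∈ Finset.range (M + 1), Pm m = 1)
    (hPI : (G * Pm M).trace.re = p)
    (a : ℝ) (ha : 0 ≤ a)
    (Z : Matrix (Fin n) (Fin n) ℂ) (hZ : Z.PosSemidef)
    (hZρ : ∀ m < M, (Z - ρ m).PosSemidef)
    (hZG : (Z - (a : ℂ) • G).PosSemidef) :
    ∑ m ∈ Finset.range M, ((ρ m * Pm m).trace).re ≤ Z.trace.re - a * p := by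
  have hPmM : (Pm M).PosSemidef := hPm M (by omega)
  -- step 1: pointwise bound
  have step1 : ∀ m ∈ Finset.range M, (ρ m * Pm m).trace.re ≤ (Z * Pm m).trace.re := by
    intro m hm
    rw [Finset.mem_range] at hm
    have h := trace_mul_re_nonneg (hZρ m hm) (hPm m (by omega))
    rw [Matrix.sub_mul, Matrix.trace_sub, Complex.sub_re] at h
    linarith
  have step2 : ∑ m ∈ Finset.range M, (ρ m * Pm m).trace.re
      ≤ ∑ m ∈ Finset.range M, (Z * Pm m).trace.re := Finset.sum_le_sum step1
  -- step 3: sum equals Tr Z - Tr(Z Π_M)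
  have hsumP : ∑ m ∈ Finset.range M, Pm m = 1 - Pm M := by
    have := hPsum
    rw [Finset.sum_range_succ] at this
    linear_combination (norm := module) this
  have step3 : ∑ m ∈ Finset.range M, (Z * Pm m).trace.re
      = Z.trace.re - (Z * Pm M).trace.re := by
    have : ∑ m ∈ Finset.range M, (Z * Pm m).trace = (Z * (1 - Pm M)).trace := by
      rw [← Matrix.trace_sum]
      congr 1
      rw [← Finset.mul_sum, hsumP]
    rw [Matrix.mul_sub, Matrix.mul_one, Matrix.trace_sub] at this
    calc ∑ m ∈ Finset.range M, (Z * Pm m).trace.re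
        = (∑ m ∈ Finset.range M, (Z * Pm m).trace).re := by rw [Complex.re_sum]
      _ = Z.trace.re - (Z * Pm M).trace.re := by rw [this, Complex.sub_re]
  -- step 4: Tr(Z Π_M) ≥ a p
  have step4 : a * p ≤ (Z * Pm M).trace.re := by
    have h := trace_mul_re_nonneg hZG hPmM
    rw [Matrix.sub_mul, Matrix.trace_sub, Complex.sub_re, Matrix.smul_mul,
      Matrix.trace_smul] at h
    have hre : ((a : ℂ) • (G * Pm M).trace).re = a * p := by
      rw [smul_eq_mul, Complex.mul_re]; simp [hPI]
    linarith
  linarith [step2, step3.le]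
end

section
/- Let ρ_0,…,ρ_{M-1} be a quantum state set with Gram operator G = Σ_m ρ_m, let 0 ≤ p ≤ 1, and let X be a positive semidefinite operator with X ≥ ρ_m for all m. For a ≥ 0 set s(a) = Tr X + Tr((aG − X)_+) − a·p. Then for every (M+1)-outcome POVM Π_0,…,Π_M with Tr(G Π_M) = p, the success probability satisfies Σ_{m=0}^{M-1} Tr(ρ_m Π_m) ≤ s(a) for every a ≥ 0, and also Σ_{m=0}^{M-1} Tr(ρ_m Π_m) ≤ 1 − p; hence it is at most min{1 − p, min_{a∈A} s(a)} for any finite set A ⊆ [0,∞). -/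
open Matrix
open scoped ComplexOrder

section Aux

variable {n : ℕ}

private lemma trRe_nonneg {A : Matrix (Fin n) (Fin n) ℂ} (hA : A.PosSemidef) :
    0 ≤ A.trace.re := by
  have h : ∀ i, 0 ≤ (A i i).re := by
    intro i
    have := hA.re_dotProduct_nonneg (Pi.single i 1)
    simpa [dotProduct, Matrix.mulVec, Pi.single_apply, Finset.sum_ite_eq,
      Finset.sum_ite_eq'] using this
  rw [Matrix.trace, Complex.re_sum]
  exact Finset.sum_nonneg fun i _ => h i

open scoped MatrixOrder in
private lemma trMulRe_nonneg {A B : Matrix (Fin n) (Fin n) ℂ}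
    (hA : A.PosSemidef) (hB : B.PosSemidef) : 0 ≤ (A * B).trace.re := by
  have h1 : A * B = CFC.sqrt A * (CFC.sqrt A * B) := by
    rw [← mul_assoc, CFC.sqrt_mul_sqrt_self A hA.nonneg]
  have h2 : (A * B).trace = (CFC.sqrt A * B * CFC.sqrt A).trace := by
    rw [h1, ← Matrix.trace_mul_comm, mul_assoc]
  have h3 : (CFC.sqrt A * B * CFC.sqrt A).PosSemidef := by
    have := hB.mul_mul_conjTranspose_same (CFC.sqrt A)
    rwa [(CFC.sqrt_nonneg A).posSemidef.1.eq] at this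
  rw [h2]; exact trRe_nonneg h3

private lemma psd_sum {s : Finset ℕ} {f : ℕ → Matrix (Fin n) (Fin n) ℂ}
    (h : ∀ i ∈ s, (f i).PosSemidef) : (∑ i ∈ s, f i).PosSemidef :=
  Finset.sum_induction f _ (fun _ _ ha hb => ha.add hb) Matrix.PosSemidef.zero h

private lemma matPosPart_posSemidef {A : Matrix (Fin n) (Fin n) ℂ} (hA : A.IsHermitian) :
    (matPosPart A).PosSemidef := by
  rw [matPosPart, dif_pos hA]
  have hd : (Matrix.diagonal (fun i =>
      if 0 < hA.eigenvalues i then (hA.eigenvalues i : ℂ) else 0)).PosSemidef := by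
    refine Matrix.posSemidef_diagonal_iff.mpr fun i => ?_
    split_ifs with h
    · exact_mod_cast (le_of_lt h)
    · exact le_rfl
  exact hd.mul_mul_conjTranspose_same _

private lemma matPosPart_sub_posSemidef {A : Matrix (Fin n) (Fin n) ℂ} (hA : A.IsHermitian) :
    (matPosPart A - A).PosSemidef := by
  rw [matPosPart, dif_pos hA]
  have hdiag : Matrix.diagonal (fun i =>
      (if 0 < hA.eigenvalues i then (hA.eigenvalues i : ℂ) else 0) -
        (RCLike.ofReal ∘ hA.eigenvalues) i)
      = Matrix.diagonal (fun i => if 0 < hA.eigenvalues i then (hA.eigenvalues i : ℂ) else 0)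
        - Matrix.diagonal (RCLike.ofReal ∘ hA.eigenvalues) := by
    rw [← Matrix.diagonal_sub]
  have heq : (hA.eigenvectorUnitary : Matrix (Fin n) (Fin n) ℂ) *
      Matrix.diagonal (fun i => if 0 < hA.eigenvalues i then (hA.eigenvalues i : ℂ) else 0) *
      star (hA.eigenvectorUnitary : Matrix (Fin n) (Fin n) ℂ) - A =
      (hA.eigenvectorUnitary : Matrix (Fin n) (Fin n) ℂ) *
      Matrix.diagonal (fun i =>
        (if 0 < hA.eigenvalues i then (hA.eigenvalues i : ℂ) else 0) -
          (RCLike.ofReal ∘ hA.eigenvalues) i) *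
      star (hA.eigenvectorUnitary : Matrix (Fin n) (Fin n) ℂ) := by
    rw [hdiag, Matrix.mul_sub, Matrix.sub_mul]
    congr 1
    conv_lhs => rw [hA.spectral_theorem, Unitary.conjStarAlgAut_apply]
  rw [heq]
  have hd : (Matrix.diagonal (fun i =>
      (if 0 < hA.eigenvalues i then (hA.eigenvalues i : ℂ) else 0) -
        (RCLike.ofReal ∘ hA.eigenvalues) i)).PosSemidef := by
    refine Matrix.posSemidef_diagonal_iff.mpr fun i => ?_
    simp only [Function.comp_apply]
    have hco : (RCLike.ofReal (hA.eigenvalues i) : ℂ) = ((hA.eigenvalues i : ℝ) : ℂ) := rfl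
    rw [hco]
    split_ifs with h
    · simp
    · push_neg at h
      rw [zero_sub, ← Complex.ofReal_neg]
      exact_mod_cast neg_nonneg.mpr h
  exact hd.mul_mul_conjTranspose_same _

end Aux

/-- With `s(a) = Tr X + Tr((aG − X)₊) − a·p` for a PSD `X` with `X ≥ ρ_m`
for all `m`, every `(M+1)`-outcome POVM with inconclusive probability `p` has success
probability at most `s(a)` for every `a ≥ 0` and at most `1 − p`; hence it is at most
`min{1 − p, min_{a ∈ A} s(a)}` for any finite set `A ⊆ [0,∞)`. -/
theorem stmt_9 {n M : ℕ} (hM : 0 < M) (ρ : ℕ → Matrix (Fin n) (Fin n) ℂ)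
    (hρ : ∀ m < M, (ρ m).PosSemidef)
    (hρpos : ∀ m < M, 0 < (ρ m).trace.re)
    (hρsum : ∑ m ∈ Finset.range M, (ρ m).trace.re = 1)
    (G : Matrix (Fin n) (Fin n) ℂ) (hG : G = ∑ m ∈ Finset.range M, ρ m)
    (p : ℝ) (hp0 : 0 ≤ p) (hp1 : p ≤ 1)
    (X : Matrix (Fin n) (Fin n) ℂ) (hX : X.PosSemidef)
    (hXρ : ∀ m < M, (X - ρ m).PosSemidef)
    (s : ℝ → ℝ)
    (hs : ∀ a : ℝ, s a = X.trace.re + (matPosPart ((a : ℂ) • G - X)).trace.re - a * p)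
    (Pm : ℕ → Matrix (Fin n) (Fin n) ℂ)
    (hPm : ∀ m < M + 1, (Pm m).PosSemidef)
    (hPsum : ∑ m ∈ Finset.range (M + 1), Pm m = 1)
    (hPI : (G * Pm M).trace.re = p) :
    (∀ a : ℝ, 0 ≤ a → ∑ m ∈ Finset.range M, ((ρ m * Pm m).trace).re ≤ s a) ∧
    (∑ m ∈ Finset.range M, ((ρ m * Pm m).trace).re ≤ 1 - p) ∧
    (∀ (A : Finset ℝ) (hA : A.Nonempty), (∀ a ∈ A, 0 ≤ a) →
      ∑ m ∈ Finset.range M, ((ρ m * Pm m).trace).re ≤ min (1 - p) (A.inf' hA s)) := by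
  -- basic facts
  have hPmM : (Pm M).PosSemidef := hPm M (Nat.lt_succ_self M)
  have hQ : ∑ m ∈ Finset.range M, Pm m = 1 - Pm M := by
    rw [eq_sub_iff_add_eq, ← Finset.sum_range_succ]; exact hPsum
  have hQpsd : (1 - Pm M).PosSemidef := by
    rw [← hQ]; exact psd_sum fun i hi => hPm i ((Finset.mem_range.mp hi).trans (Nat.lt_succ_self M))
  have hGpsd : G.PosSemidef := by
    rw [hG]; exact psd_sum fun i hi => hρ i (Finset.mem_range.mp hi)
  -- generic bound: if Y ≥ ρ m for all m < M then success ≤ Tr Y - Tr (Y Π_M)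
  have key : ∀ Y : Matrix (Fin n) (Fin n) ℂ, (∀ m < M, (Y - ρ m).PosSemidef) →
      ∑ m ∈ Finset.range M, ((ρ m * Pm m).trace).re ≤ Y.trace.re - (Y * Pm M).trace.re := by
    intro Y hY
    have h1 : ∑ m ∈ Finset.range M, ((ρ m * Pm m).trace).re ≤
        ∑ m ∈ Finset.range M, ((Y * Pm m).trace).re := by
      refine Finset.sum_le_sum fun m hm => ?_
      have hm' := Finset.mem_range.mp hm
      have := trMulRe_nonneg (hY m hm') (hPm m (hm'.trans (Nat.lt_succ_self M)))
      rw [Matrix.sub_mul, Matrix.trace_sub, Complex.sub_re] at this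
      linarith
    have h2 : ∑ m ∈ Finset.range M, ((Y * Pm m).trace).re =
        Y.trace.re - (Y * Pm M).trace.re := by
      have : ∑ m ∈ Finset.range M, (Y * Pm m) = Y * (1 - Pm M) := by
        rw [← hQ, Finset.mul_sum]
      calc ∑ m ∈ Finset.range M, ((Y * Pm m).trace).re
          = ((∑ m ∈ Finset.range M, (Y * Pm m)).trace).re := by
            rw [Matrix.trace_sum, Complex.re_sum]
        _ = Y.trace.re - (Y * Pm M).trace.re := by
            rw [this, Matrix.mul_sub, mul_one, Matrix.trace_sub, Complex.sub_re]
    linarith [h1, h2.le]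
  -- bound by 1 - p
  have bound1 : ∑ m ∈ Finset.range M, ((ρ m * Pm m).trace).re ≤ 1 - p := by
    have hGρ : ∀ m < M, (G - ρ m).PosSemidef := by
      intro m hm
      have : G - ρ m = ∑ m' ∈ (Finset.range M).erase m, ρ m' := by
        rw [hG, eq_comm, eq_sub_iff_add_eq, Finset.sum_erase_add _ _ (Finset.mem_range.mpr hm)]
      rw [this]
      exact psd_sum fun i hi => hρ i (Finset.mem_range.mp (Finset.mem_of_mem_erase hi))
    have hGtr : G.trace.re = 1 := by
      rw [hG, Matrix.trace_sum, Complex.re_sum, hρsum]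
    have := key G hGρ
    rw [hGtr, hPI] at this
    exact this
  -- bound by s a
  have bound2 : ∀ a : ℝ, 0 ≤ a → ∑ m ∈ Finset.range M, ((ρ m * Pm m).trace).re ≤ s a := by
    intro a ha
    have hAH : ((a : ℂ) • G - X).IsHermitian := by
      refine Matrix.IsHermitian.sub ?_ hX.1
      unfold Matrix.IsHermitian
      rw [Matrix.conjTranspose_smul, Complex.star_def, Complex.conj_ofReal, hGpsd.1.eq]
    set P := matPosPart ((a : ℂ) • G - X) with hPdef
    have hPpsd : P.PosSemidef := matPosPart_posSemidef hAH
    have hPsub : (P - ((a : ℂ) • G - X)).PosSemidef := matPosPart_sub_posSemidef hAH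
    -- Tr((aG - X)·Π_M) ≤ Tr(P·Π_M)
    have h3 : ((((a : ℂ) • G - X)) * Pm M).trace.re ≤ (P * Pm M).trace.re := by
      have := trMulRe_nonneg hPsub hPmM
      rw [Matrix.sub_mul, Matrix.trace_sub, Complex.sub_re] at this
      linarith
    -- Tr(P·Π_M) ≤ Tr P
    have h4 : (P * Pm M).trace.re ≤ P.trace.re := by
      have := trMulRe_nonneg hPpsd hQpsd
      rw [Matrix.mul_sub, mul_one, Matrix.trace_sub, Complex.sub_re] at this
      linarith
    have h5 : ((((a : ℂ) • G - X)) * Pm M).trace.re = a * p - (X * Pm M).trace.re := by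
      rw [Matrix.sub_mul, Matrix.smul_mul, Matrix.trace_sub, Matrix.trace_smul,
        Complex.sub_re, smul_eq_mul, Complex.re_ofReal_mul, hPI]
    have h6 := key X hXρ
    rw [hs a]
    have : a * p - (X * Pm M).trace.re ≤ P.trace.re := by
      rw [← h5]; exact h3.trans h4
    linarith
  refine ⟨bound2, bound1, ?_⟩
  intro A hA hA0
  exact le_min bound1 (Finset.le_inf' hA _ fun a ha => bound2 a (hA0 a ha))
end
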